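/- There is an absolute constant A > 0 such that for every θ ∈ [0,π], every γ ∈ (0, π/2], and every ε ∈ (0,1], there exists a real polynomial p with deg p ≤ ⌈A/(γ·ε)⌉ such that: (b) |p(cos φ)| ≤ ε for every φ ∈ [0,π] with φ ∉ [θ−2γ, θ+2γ]; (c) |p(cos φ) − 1| ≤ ε for every φ ∈ [θ−γ, θ+γ]; and (d) |p(cos φ)| ≤ 1+ε for every φ ∈ [0,π]. In other words, (O(1/(γε)), ε, θ, γ)-boxcar polynomials exist. -/

import Mathlib

open Real Finset intervalIntegral

noncomputable section

namespace BoxcarAux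

/-- Fejér-type kernel. -/
def Fk (m : ℕ) (t : ℝ) : ℝ :=
  (1 / (m : ℝ)) * ∑ j ∈ Finset.range m, ∑ k ∈ Finset.range m,
    Real.cos (((j : ℝ) - (k : ℝ)) * t)

lemma Fk_eq (m : ℕ) (t : ℝ) :
    Fk m t = (1 / (m : ℝ)) * ((∑ k ∈ Finset.range m, Real.cos (k * t)) ^ 2
      + (∑ k ∈ Finset.range m, Real.sin (k * t)) ^ 2) := by
  unfold Fk
  congr 1
  rw [sq, sq, Finset.sum_mul_sum, Finset.sum_mul_sum, ← Finset.sum_add_distrib]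
  refine Finset.sum_congr rfl fun j _ => ?_
  rw [← Finset.sum_add_distrib]
  refine Finset.sum_congr rfl fun k _ => ?_
  rw [sub_mul, Real.cos_sub]

lemma Fk_nonneg (m : ℕ) (t : ℝ) : 0 ≤ Fk m t := by
  rw [Fk_eq]; positivity

lemma Fk_cont (m : ℕ) : Continuous (Fk m) := by
  unfold Fk
  exact continuous_const.mul (continuous_finset_sum _ fun j _ =>
    continuous_finset_sum _ fun k _ => Real.continuous_cos.comp (continuous_const.mul continuous_id))

lemma Fk_even (m : ℕ) (t : ℝ) : Fk m (-t) = Fk m t := by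
  unfold Fk
  simp only [mul_neg, Real.cos_neg]

lemma Fk_periodic (m : ℕ) : Function.Periodic (Fk m) (2 * π) := by
  intro t
  unfold Fk
  congr 1
  refine Finset.sum_congr rfl fun j _ => Finset.sum_congr rfl fun k _ => ?_
  have h : ((j : ℝ) - (k : ℝ)) * (t + 2 * π)
      = ((j : ℝ) - (k : ℝ)) * t + ((j : ℤ) - (k : ℤ) : ℤ) * (2 * π) := by
    push_cast; ring
  rw [h, Real.cos_add_int_mul_two_pi]

lemma sum_bound (m : ℕ) {t : ℝ} (h : Real.sin (t / 2) ≠ 0) :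
    (∑ k ∈ Finset.range m, Real.cos (k * t)) ^ 2
      + (∑ k ∈ Finset.range m, Real.sin (k * t)) ^ 2 ≤ 1 / Real.sin (t / 2) ^ 2 := by
  set C := ∑ k ∈ Finset.range m, Real.cos (k * t) with hC
  set S := ∑ k ∈ Finset.range m, Real.sin (k * t) with hS
  have hc : 2 * Real.sin (t / 2) * C = Real.sin ((m : ℝ) * t - t / 2) + Real.sin (t / 2) := by
    rw [hC, Finset.mul_sum]
    have hterm : ∀ k : ℕ, 2 * Real.sin (t / 2) * Real.cos ((k : ℝ) * t)
        = Real.sin (((k + 1 : ℕ) : ℝ) * t - t / 2) - Real.sin ((k : ℝ) * t - t / 2) := by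
      intro k
      rw [Real.sin_sub_sin]
      push_cast
      ring_nf
    simp_rw [hterm]
    rw [Finset.sum_range_sub (fun k => Real.sin ((k : ℝ) * t - t / 2)) m]
    norm_num
  have hs : 2 * Real.sin (t / 2) * S = Real.cos (t / 2) - Real.cos ((m : ℝ) * t - t / 2) := by
    rw [hS, Finset.mul_sum]
    have hterm : ∀ k : ℕ, 2 * Real.sin (t / 2) * Real.sin ((k : ℝ) * t)
        = (-Real.cos (((k + 1 : ℕ) : ℝ) * t - t / 2)) - (-Real.cos ((k : ℝ) * t - t / 2)) := by
      intro k
      have := Real.cos_sub_cos ((k : ℝ) * t - t / 2) ((k : ℝ) * t + t / 2)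
      push_cast
      rw [show ((k : ℝ) + 1) * t - t / 2 = (k : ℝ) * t + t / 2 by ring]
      rw [show ((k:ℝ) * t - t/2 + ((k:ℝ) * t + t/2))/2 = (k:ℝ)*t by ring,
        show ((k:ℝ) * t - t/2 - ((k:ℝ) * t + t/2))/2 = -(t/2) by ring] at this
      rw [Real.sin_neg] at this
      linarith [this]
    simp_rw [hterm]
    rw [Finset.sum_range_sub (fun k => -Real.cos ((k : ℝ) * t - t / 2)) m]
    norm_num
    ring
  have e1 := Real.sin_sq_add_cos_sq ((m : ℝ) * t - t / 2)
  have e2 := Real.sin_sq_add_cos_sq (t / 2)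
  have e3 : Real.cos ((m : ℝ) * t)
      = Real.cos ((m : ℝ) * t - t / 2) * Real.cos (t / 2)
        - Real.sin ((m : ℝ) * t - t / 2) * Real.sin (t / 2) := by
    rw [← Real.cos_add]; ring_nf
  have e4 : (-1 : ℝ) ≤ Real.cos ((m : ℝ) * t) := Real.neg_one_le_cos _
  have key : (2 * Real.sin (t / 2)) ^ 2 * (C ^ 2 + S ^ 2) ≤ 4 := by
    have h2 : (2 * Real.sin (t / 2)) ^ 2 * (C ^ 2 + S ^ 2)
        = (2 * Real.sin (t / 2) * C) ^ 2 + (2 * Real.sin (t / 2) * S) ^ 2 := by ring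
    rw [h2, hc, hs]
    nlinarith [e1, e2, e3, e4]
  have hs2 : (0 : ℝ) < Real.sin (t / 2) ^ 2 := by positivity
  rw [le_div_iff₀ hs2]
  nlinarith [key]

lemma Fk_le {m : ℕ} (hm : 0 < m) {t : ℝ} (h : Real.sin (t / 2) ≠ 0) :
    Fk m t ≤ 1 / ((m : ℝ) * Real.sin (t / 2) ^ 2) := by
  rw [Fk_eq]
  have hm' : (0 : ℝ) < m := by exact_mod_cast hm
  have := sum_bound m h
  rw [show 1 / ((m:ℝ) * Real.sin (t/2)^2) = (1/(m:ℝ)) * (1 / Real.sin (t/2)^2) by ring]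
  apply mul_le_mul_of_nonneg_left this (by positivity)

lemma Fk_intInt (m : ℕ) (a b : ℝ) : IntervalIntegrable (Fk m) MeasureTheory.volume a b :=
  (Fk_cont m).intervalIntegrable a b

lemma Fk_total {m : ℕ} (hm : 0 < m) : ∫ t in (-π)..π, Fk m t = 2 * π := by
  have hterm : ∀ j k : ℕ, (∫ t in (-π)..π, Real.cos (((j : ℝ) - (k : ℝ)) * t))
      = if j = k then 2 * π else 0 := by
    intro j k
    rcases eq_or_ne j k with h | h
    · subst h
      simp [sub_self, Real.cos_zero]
      ring
    · have hn : ((j : ℝ) - (k : ℝ)) ≠ 0 := sub_ne_zero.2 (by exact_mod_cast h)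
      rw [intervalIntegral.integral_comp_mul_left (fun x => Real.cos x) hn, integral_cos]
      have h1 : Real.sin (((j : ℝ) - (k : ℝ)) * π) = 0 := by
        rw [show ((j:ℝ) - (k:ℝ)) * π = (((j : ℤ) - (k : ℤ) : ℤ) : ℝ) * π by push_cast; ring,
          Real.sin_int_mul_pi]
      have h2 : Real.sin (((j : ℝ) - (k : ℝ)) * -π) = 0 := by
        rw [show ((j:ℝ) - (k:ℝ)) * -π = (((k : ℤ) - (j : ℤ) : ℤ) : ℝ) * π by push_cast; ring,
          Real.sin_int_mul_pi]
      rw [h1, h2]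
      simp [h]
  unfold Fk
  rw [intervalIntegral.integral_const_mul]
  have hsw1 : (∫ x in (-π)..π, ∑ j ∈ Finset.range m, ∑ k ∈ Finset.range m,
      Real.cos (((j : ℝ) - (k : ℝ)) * x))
      = ∑ j ∈ Finset.range m, ∫ x in (-π)..π, ∑ k ∈ Finset.range m,
        Real.cos (((j : ℝ) - (k : ℝ)) * x) := by
    apply intervalIntegral.integral_finset_sum
    intro j _
    apply Continuous.intervalIntegrable
    fun_prop
  rw [hsw1]
  have : ∀ j ∈ Finset.range m, (∫ t in (-π)..π,
      ∑ k ∈ Finset.range m, Real.cos (((j : ℝ) - (k : ℝ)) * t)) = 2 * π := by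
    intro j hj
    have hsw2 : (∫ x in (-π)..π, ∑ k ∈ Finset.range m, Real.cos (((j : ℝ) - (k : ℝ)) * x))
        = ∑ k ∈ Finset.range m, ∫ x in (-π)..π, Real.cos (((j : ℝ) - (k : ℝ)) * x) := by
      apply intervalIntegral.integral_finset_sum
      intro k _
      apply Continuous.intervalIntegrable
      fun_prop
    rw [hsw2]
    simp_rw [hterm j]
    rw [Finset.sum_ite_eq (Finset.range m) j (fun _ => 2 * π)]
    simp [Finset.mem_range.2 (Finset.mem_range.1 hj)]
  rw [Finset.sum_congr rfl this]
  simp only [Finset.sum_const, Finset.card_range, nsmul_eq_mul]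
  have hm' : ((m : ℝ)) ≠ 0 := by positivity
  field_simp

lemma Fk_mass {m : ℕ} (hm : 0 < m) (φ : ℝ) :
    ∫ t in (φ - π)..(φ + π), Fk m t = 2 * π := by
  have h := (Fk_periodic m).intervalIntegral_add_eq (φ - π) (-π)
  rw [show φ - π + 2 * π = φ + π by ring, show -π + 2 * π = π by ring] at h
  rw [h, Fk_total hm]

lemma cot_le {γ x : ℝ} (hγ : 0 < γ) (hγ2 : γ ≤ π / 2) (h1 : γ / 4 ≤ x) (h2 : x ≤ π - γ / 4) :
    -(2 * π / γ) ≤ Real.cos x / Real.sin x ∧ Real.cos x / Real.sin x ≤ 2 * π / γ := by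
  have hπ := Real.pi_pos
  have hsx : 0 < Real.sin x :=
    Real.sin_pos_of_pos_of_lt_pi (by linarith) (by linarith)
  have hs4 : 0 < Real.sin (γ / 4) :=
    Real.sin_pos_of_pos_of_lt_pi (by linarith) (by linarith)
  have hs4' : γ / (2 * π) ≤ Real.sin (γ / 4) := by
    have := Real.mul_le_sin (x := γ / 4) (by linarith) (by linarith)
    calc γ / (2 * π) = 2 / π * (γ / 4) := by field_simp; ring
    _ ≤ Real.sin (γ / 4) := this
  have hc4 : Real.cos (γ / 4) / Real.sin (γ / 4) ≤ 2 * π / γ := by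
    rw [div_le_div_iff₀ hs4 hγ]
    have h5 : Real.cos (γ / 4) ≤ 1 := Real.cos_le_one _
    have h6 : γ ≤ 2 * π * Real.sin (γ / 4) := by
      rw [← div_le_iff₀' (by positivity : (0:ℝ) < 2 * π)]
      exact hs4'
    nlinarith
  constructor
  · have hup : -(Real.cos (γ / 4) / Real.sin (γ / 4)) ≤ Real.cos x / Real.sin x := by
      rw [neg_div', div_le_div_iff₀ hs4 hsx]
      have : 0 ≤ Real.sin (x + γ / 4) :=
        Real.sin_nonneg_of_nonneg_of_le_pi (by linarith) (by linarith)
      rw [Real.sin_add] at this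
      nlinarith
    linarith
  · have hdn : Real.cos x / Real.sin x ≤ Real.cos (γ / 4) / Real.sin (γ / 4) := by
      rw [div_le_div_iff₀ hsx hs4]
      have : 0 ≤ Real.sin (x - γ / 4) :=
        Real.sin_nonneg_of_nonneg_of_le_pi (by linarith) (by linarith)
      rw [Real.sin_sub] at this
      nlinarith
    linarith

lemma Fk_piece {m : ℕ} (hm : 0 < m) {γ t₁ t₂ : ℝ} (hγ : 0 < γ) (hγ2 : γ ≤ π / 2)
    (h1 : γ / 2 ≤ t₁) (h12 : t₁ ≤ t₂) (h2 : t₂ ≤ 2 * π - γ / 2) :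
    ∫ t in t₁..t₂, Fk m t ≤ 8 * π / ((m : ℝ) * γ) := by
  have hπ := Real.pi_pos
  have hm' : (0 : ℝ) < m := by exact_mod_cast hm
  have hsin : ∀ t ∈ Set.Icc t₁ t₂, 0 < Real.sin (t / 2) := by
    intro t ht
    exact Real.sin_pos_of_pos_of_lt_pi (by linarith [ht.1]) (by linarith [ht.2])
  have hcsc_cont : ContinuousOn (fun t => 1 / ((m : ℝ) * Real.sin (t / 2) ^ 2)) (Set.Icc t₁ t₂) := by
    apply ContinuousOn.div continuousOn_const
    · exact (continuous_const.mul (((Real.continuous_sin.comp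
        (continuous_id.div_const 2))).pow 2)).continuousOn
    · intro t ht
      have := hsin t ht
      positivity
  have hcsc_int : IntervalIntegrable (fun t => 1 / ((m : ℝ) * Real.sin (t / 2) ^ 2))
      MeasureTheory.volume t₁ t₂ := by
    apply ContinuousOn.intervalIntegrable
    rwa [Set.uIcc_of_le h12]
  have hmono : ∫ t in t₁..t₂, Fk m t ≤ ∫ t in t₁..t₂, 1 / ((m : ℝ) * Real.sin (t / 2) ^ 2) := by
    apply intervalIntegral.integral_mono_on h12 (Fk_intInt m t₁ t₂) hcsc_int
    intro t ht
    exact Fk_le hm (ne_of_gt (hsin t ht))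
  have hftc : ∫ t in t₁..t₂, 1 / ((m : ℝ) * Real.sin (t / 2) ^ 2)
      = (-2 / m) * (Real.cos (t₂ / 2) / Real.sin (t₂ / 2))
        - (-2 / m) * (Real.cos (t₁ / 2) / Real.sin (t₁ / 2)) := by
    apply intervalIntegral.integral_eq_sub_of_hasDerivAt
    · intro t ht
      rw [Set.uIcc_of_le h12] at ht
      have hst : 0 < Real.sin (t / 2) := hsin t ht
      have hd1 : HasDerivAt (fun t : ℝ => Real.sin (t / 2)) (Real.cos (t / 2) * (1 / 2)) t := by
        have := (Real.hasDerivAt_sin (t / 2)).comp t ((hasDerivAt_id t).div_const 2)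
        simpa [Function.comp_def] using this
      have hd2 : HasDerivAt (fun t : ℝ => Real.cos (t / 2)) (-Real.sin (t / 2) * (1 / 2)) t := by
        have := (Real.hasDerivAt_cos (t / 2)).comp t ((hasDerivAt_id t).div_const 2)
        simpa [Function.comp_def] using this
      have hdiv := (hd2.div hd1 (ne_of_gt hst))
      have hd := hdiv.const_mul ((-2 : ℝ) / m)
      refine hd.congr_deriv ?_
      have e := Real.sin_sq_add_cos_sq (t / 2)
      have hnum : -Real.sin (t / 2) * (1 / 2) * Real.sin (t / 2)
          - Real.cos (t / 2) * (Real.cos (t / 2) * (1 / 2)) = -(1 / 2) := by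
        linear_combination (-(1 / 2)) * e
      rw [hnum]
      field_simp
    · exact hcsc_int
  have hcot1 := cot_le hγ hγ2 (by linarith : γ / 4 ≤ t₁ / 2) (by linarith : t₁ / 2 ≤ π - γ / 4)
  have hcot2 := cot_le hγ hγ2 (by linarith : γ / 4 ≤ t₂ / 2) (by linarith : t₂ / 2 ≤ π - γ / 4)
  rw [hftc] at hmono
  have hfin : (-2 / (m : ℝ)) * (Real.cos (t₂ / 2) / Real.sin (t₂ / 2))
      - (-2 / m) * (Real.cos (t₁ / 2) / Real.sin (t₁ / 2)) ≤ 8 * π / ((m : ℝ) * γ) := by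
    have h8 : 8 * π / ((m : ℝ) * γ) = (2 / m) * (2 * π / γ) + (2 / m) * (2 * π / γ) := by
      field_simp; ring
    rw [h8]
    have hp1 : (-2 / (m : ℝ)) * (Real.cos (t₂ / 2) / Real.sin (t₂ / 2)) ≤ (2 / m) * (2 * π / γ) := by
      have := hcot2.1
      rw [show (-2 / (m : ℝ)) * (Real.cos (t₂ / 2) / Real.sin (t₂ / 2))
        = (2 / m) * (-(Real.cos (t₂ / 2) / Real.sin (t₂ / 2))) by ring]
      apply mul_le_mul_of_nonneg_left (by linarith) (by positivity)
    have hp2 : -((-2 / (m : ℝ)) * (Real.cos (t₁ / 2) / Real.sin (t₁ / 2))) ≤ (2 / m) * (2 * π / γ) := by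
      rw [show -((-2 / (m : ℝ)) * (Real.cos (t₁ / 2) / Real.sin (t₁ / 2)))
        = (2 / m) * (Real.cos (t₁ / 2) / Real.sin (t₁ / 2)) by ring]
      apply mul_le_mul_of_nonneg_left hcot1.2 (by positivity)
    linarith
  linarith

lemma Fk_piece_neg {m : ℕ} (hm : 0 < m) {γ t₁ t₂ : ℝ} (hγ : 0 < γ) (hγ2 : γ ≤ π / 2)
    (h1 : -(2 * π) + γ / 2 ≤ t₁) (h12 : t₁ ≤ t₂) (h2 : t₂ ≤ -(γ / 2)) :
    ∫ t in t₁..t₂, Fk m t ≤ 8 * π / ((m : ℝ) * γ) := by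
  have h := intervalIntegral.integral_comp_neg (a := -t₂) (b := -t₁) (fun x => Fk m x)
  simp_rw [Fk_even m] at h
  rw [show -(-t₂) = t₂ by ring, show -(-t₁) = t₁ by ring] at h
  rw [← h]
  exact Fk_piece hm hγ hγ2 (by linarith) (by linarith) (by linarith)

def w (l r : ℝ) (j k : ℕ) : ℝ :=
  if j = k then 2 * (r - l)
  else (2 / ((j : ℝ) - (k : ℝ))) * (Real.sin (((j : ℝ) - (k : ℝ)) * r)
    - Real.sin (((j : ℝ) - (k : ℝ)) * l))

def bp (m : ℕ) (l r : ℝ) : Polynomial ℝ :=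
  Polynomial.C (1 / (2 * π * (m : ℝ))) * ∑ j ∈ Finset.range m, ∑ k ∈ Finset.range m,
    Polynomial.C (w l r j k) * Polynomial.Chebyshev.T ℝ ((j : ℤ) - (k : ℤ))

lemma T_natDegree_le (n : ℤ) : (Polynomial.Chebyshev.T ℝ n).natDegree ≤ n.natAbs := by
  rw [← Polynomial.Chebyshev.T_natAbs]
  generalize n.natAbs = N
  induction N using Nat.twoStepInduction with
  | zero => simp [Polynomial.Chebyshev.T_zero]
  | one => simp [Polynomial.Chebyshev.T_one]
  | more n ih2 ih1 =>
    rw [show ((n + 2 : ℕ) : ℤ) = ((n : ℕ) : ℤ) + 2 by push_cast; ring,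
      Polynomial.Chebyshev.T_add_two]
    apply le_trans (Polynomial.natDegree_sub_le _ _)
    rw [max_le_iff]
    constructor
    · apply le_trans (Polynomial.natDegree_mul_le)
      have h1 : (2 * Polynomial.X : Polynomial ℝ).natDegree ≤ 1 := by
        apply le_trans (Polynomial.natDegree_mul_le)
        simp
      have h2 : (Polynomial.Chebyshev.T ℝ (((n : ℕ) : ℤ) + 1)).natDegree ≤ n + 1 := by
        rw [show ((n : ℕ) : ℤ) + 1 = ((n + 1 : ℕ) : ℤ) by push_cast; ring]
        exact ih1
      omega
    · omega

lemma bp_natDegree (m : ℕ) (l r : ℝ) : (bp m l r).natDegree ≤ m := by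
  unfold bp
  apply le_trans (Polynomial.natDegree_mul_le)
  rw [Polynomial.natDegree_C, zero_add]
  apply Polynomial.natDegree_sum_le_of_forall_le
  intro j hj
  apply Polynomial.natDegree_sum_le_of_forall_le
  intro k hk
  apply le_trans (Polynomial.natDegree_mul_le)
  rw [Polynomial.natDegree_C, zero_add]
  apply le_trans (T_natDegree_le _)
  rw [Finset.mem_range] at hj hk
  omega

lemma bp_eval {m : ℕ} (hm : 0 < m) (l r φ : ℝ) :
    (bp m l r).eval (Real.cos φ)
      = (1 / (2 * π)) * ∫ u in l..r, (Fk m (φ - u) + Fk m (φ + u)) := by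
  have hint : ∀ j k : ℕ, (∫ u in l..r,
      (Real.cos (((j : ℝ) - (k : ℝ)) * (φ - u)) + Real.cos (((j : ℝ) - (k : ℝ)) * (φ + u))))
      = w l r j k * Real.cos (((j : ℝ) - (k : ℝ)) * φ) := by
    intro j k
    have hcc : ∀ u : ℝ, Real.cos (((j : ℝ) - (k : ℝ)) * (φ - u))
        + Real.cos (((j : ℝ) - (k : ℝ)) * (φ + u))
        = 2 * Real.cos (((j : ℝ) - (k : ℝ)) * φ) * Real.cos (((j : ℝ) - (k : ℝ)) * u) := by
      intro u
      rw [mul_sub, mul_add, Real.cos_sub, Real.cos_add]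
      ring
    simp_rw [hcc]
    rw [intervalIntegral.integral_const_mul]
    rcases eq_or_ne j k with h | h
    · subst h
      simp only [sub_self, zero_mul, Real.cos_zero, w, if_pos rfl]
      rw [intervalIntegral.integral_const]
      simp [smul_eq_mul]
    · have hn : ((j : ℝ) - (k : ℝ)) ≠ 0 := sub_ne_zero.2 (by exact_mod_cast h)
      rw [intervalIntegral.integral_comp_mul_left (fun x => Real.cos x) hn, integral_cos]
      simp only [w, if_neg h, smul_eq_mul]
      field_simp
  have hL : (bp m l r).eval (Real.cos φ) = (1 / (2 * π * (m : ℝ)))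
      * ∑ j ∈ Finset.range m, ∑ k ∈ Finset.range m,
        w l r j k * Real.cos (((j : ℝ) - (k : ℝ)) * φ) := by
    unfold bp
    rw [Polynomial.eval_mul, Polynomial.eval_C, Polynomial.eval_finset_sum]
    congr 1
    refine Finset.sum_congr rfl fun j _ => ?_
    rw [Polynomial.eval_finset_sum]
    refine Finset.sum_congr rfl fun k _ => ?_
    rw [Polynomial.eval_mul, Polynomial.eval_C, Polynomial.Chebyshev.T_real_cos]
    congr 2
    push_cast
    ring
  have hRHS : (∫ u in l..r, (Fk m (φ - u) + Fk m (φ + u)))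
      = (1 / (m : ℝ)) * ∑ j ∈ Finset.range m, ∑ k ∈ Finset.range m,
        w l r j k * Real.cos (((j : ℝ) - (k : ℝ)) * φ) := by
    have hone : ∀ u : ℝ, Fk m (φ - u) + Fk m (φ + u)
        = (1 / (m : ℝ)) * ∑ j ∈ Finset.range m, ∑ k ∈ Finset.range m,
          (Real.cos (((j : ℝ) - (k : ℝ)) * (φ - u))
            + Real.cos (((j : ℝ) - (k : ℝ)) * (φ + u))) := by
      intro u
      unfold Fk
      rw [← mul_add, ← Finset.sum_add_distrib]
      congr 1
      refine Finset.sum_congr rfl fun j _ => ?_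
      rw [← Finset.sum_add_distrib]
    simp_rw [hone]
    rw [intervalIntegral.integral_const_mul]
    have hsw1 : (∫ u in l..r, ∑ j ∈ Finset.range m, ∑ k ∈ Finset.range m,
        (Real.cos (((j : ℝ) - (k : ℝ)) * (φ - u)) + Real.cos (((j : ℝ) - (k : ℝ)) * (φ + u))))
        = ∑ j ∈ Finset.range m, ∫ u in l..r, ∑ k ∈ Finset.range m,
          (Real.cos (((j : ℝ) - (k : ℝ)) * (φ - u)) + Real.cos (((j : ℝ) - (k : ℝ)) * (φ + u))) := by
      apply intervalIntegral.integral_finset_sum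
      intro j _
      apply Continuous.intervalIntegrable
      fun_prop
    rw [hsw1]
    congr 1
    refine Finset.sum_congr rfl fun j _ => ?_
    have hsw2 : (∫ u in l..r, ∑ k ∈ Finset.range m,
        (Real.cos (((j : ℝ) - (k : ℝ)) * (φ - u)) + Real.cos (((j : ℝ) - (k : ℝ)) * (φ + u))))
        = ∑ k ∈ Finset.range m, ∫ u in l..r,
          (Real.cos (((j : ℝ) - (k : ℝ)) * (φ - u)) + Real.cos (((j : ℝ) - (k : ℝ)) * (φ + u))) := by
      apply intervalIntegral.integral_finset_sum
      intro k _
      apply Continuous.intervalIntegrable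
      fun_prop
    rw [hsw2]
    exact Finset.sum_congr rfl fun k _ => hint j k
  rw [hL, hRHS]
  ring

end BoxcarAux

set_option maxHeartbeats 2000000 in
open BoxcarAux in
/-- Existence of `(O(1/(γε)), ε, θ, γ)`-boxcar polynomials. -/
theorem stmt_1 :
    ∃ A : ℝ, 0 < A ∧
      ∀ θ : ℝ, θ ∈ Set.Icc 0 Real.pi →
      ∀ γ : ℝ, γ ∈ Set.Ioc 0 (Real.pi / 2) →
      ∀ ε : ℝ, ε ∈ Set.Ioc (0 : ℝ) 1 →
      ∃ p : Polynomial ℝ, p.natDegree ≤ ⌈A / (γ * ε)⌉₊ ∧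
        (∀ φ ∈ Set.Icc (0 : ℝ) Real.pi, φ ∉ Set.Icc (θ - 2 * γ) (θ + 2 * γ) →
          |p.eval (Real.cos φ)| ≤ ε) ∧
        (∀ φ ∈ Set.Icc (θ - γ) (θ + γ), |p.eval (Real.cos φ) - 1| ≤ ε) ∧
        (∀ φ ∈ Set.Icc (0 : ℝ) Real.pi, |p.eval (Real.cos φ)| ≤ 1 + ε) := by
  refine ⟨12, by norm_num, ?_⟩
  rintro θ ⟨hθ0, hθπ⟩ γ ⟨hγ0, hγπ⟩ ε ⟨hε0, hε1⟩
  have hπ := Real.pi_pos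
  set m : ℕ := ⌈(12 : ℝ) / (γ * ε)⌉₊ with hmdef
  have hγε : (0 : ℝ) < γ * ε := by positivity
  have hmpos : 0 < m := Nat.ceil_pos.2 (by positivity)
  have hm' : (0 : ℝ) < m := by exact_mod_cast hmpos
  have hmge : 12 / (γ * ε) ≤ (m : ℝ) := Nat.le_ceil _
  have hkey : 12 / ((m : ℝ) * γ) ≤ ε := by
    rw [div_le_iff₀ (by positivity)]
    rw [div_le_iff₀ hγε] at hmge
    nlinarith
  set l := max 0 (θ - 3 * γ / 2) with hldef
  set r := min π (θ + 3 * γ / 2) with hrdef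
  have hl0 : 0 ≤ l := le_max_left _ _
  have hlθ : l ≤ θ := max_le hθ0 (by linarith)
  have hrθ : θ ≤ r := le_min hθπ (by linarith)
  have hrπ : r ≤ π := min_le_left _ _
  have hlr : l ≤ r := le_trans hlθ hrθ
  have hlge : θ - 3 * γ / 2 ≤ l := le_max_right _ _
  have hrle : r ≤ θ + 3 * γ / 2 := min_le_right _ _
  have hint1 : ∀ φ a b : ℝ, IntervalIntegrable (fun u => Fk m (φ - u))
      MeasureTheory.volume a b := fun φ a b =>
    (((Fk_cont m).comp (continuous_const.sub continuous_id))).intervalIntegrable a b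
  have hint2 : ∀ φ a b : ℝ, IntervalIntegrable (fun u => Fk m (φ + u))
      MeasureTheory.volume a b := fun φ a b =>
    (((Fk_cont m).comp (continuous_const.add continuous_id))).intervalIntegrable a b
  have heval : ∀ φ : ℝ, (bp m l r).eval (Real.cos φ)
      = (1 / (2 * π)) * ((∫ t in (φ - r)..(φ - l), Fk m t)
        + ∫ t in (φ + l)..(φ + r), Fk m t) := by
    intro φ
    rw [bp_eval hmpos l r φ]
    congr 1
    rw [intervalIntegral.integral_add (hint1 φ l r) (hint2 φ l r)]
    congr 1
    · exact intervalIntegral.integral_comp_sub_left (Fk m) φ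
    · exact intervalIntegral.integral_comp_add_left (Fk m) φ
  set B := 8 * π / ((m : ℝ) * γ) with hBdef
  have hB0 : 0 ≤ B := by positivity
  have hdec : ∀ φ : ℝ, (∫ t in (φ - π)..(φ - r), Fk m t)
      + ((∫ t in (φ - r)..(φ - l), Fk m t)
      + ((∫ t in (φ - l)..(φ + l), Fk m t)
      + ((∫ t in (φ + l)..(φ + r), Fk m t)
      + (∫ t in (φ + r)..(φ + π), Fk m t)))) = 2 * π := by
    intro φ
    rw [intervalIntegral.integral_add_adjacent_intervals
      (Fk_intInt m (φ + l) (φ + r)) (Fk_intInt m (φ + r) (φ + π))]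
    rw [intervalIntegral.integral_add_adjacent_intervals
      (Fk_intInt m (φ - l) (φ + l)) (Fk_intInt m (φ + l) (φ + π))]
    rw [intervalIntegral.integral_add_adjacent_intervals
      (Fk_intInt m (φ - r) (φ - l)) (Fk_intInt m (φ - l) (φ + π))]
    rw [intervalIntegral.integral_add_adjacent_intervals
      (Fk_intInt m (φ - π) (φ - r)) (Fk_intInt m (φ - r) (φ + π))]
    exact Fk_mass hmpos φ
  have hnn : ∀ a b : ℝ, a ≤ b → 0 ≤ ∫ t in a..b, Fk m t := fun a b hab =>
    intervalIntegral.integral_nonneg hab fun t _ => Fk_nonneg m t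
  have hq01 : ∀ φ : ℝ, 0 ≤ (bp m l r).eval (Real.cos φ)
      ∧ (bp m l r).eval (Real.cos φ) ≤ 1 := by
    intro φ
    have h1 := hnn (φ - π) (φ - r) (by linarith)
    have h2 := hnn (φ - r) (φ - l) (by linarith)
    have h3 := hnn (φ - l) (φ + l) (by linarith)
    have h4 := hnn (φ + l) (φ + r) (by linarith)
    have h5 := hnn (φ + r) (φ + π) (by linarith)
    have hd := hdec φ
    rw [heval φ]
    constructor
    · apply mul_nonneg (by positivity)
      linarith
    · have hsum : (∫ t in (φ - r)..(φ - l), Fk m t)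
          + (∫ t in (φ + l)..(φ + r), Fk m t) ≤ 2 * π := by linarith
      calc (1 / (2 * π)) * ((∫ t in (φ - r)..(φ - l), Fk m t)
            + ∫ t in (φ + l)..(φ + r), Fk m t)
          ≤ (1 / (2 * π)) * (2 * π) := by
            apply mul_le_mul_of_nonneg_left hsum (by positivity)
        _ = 1 := by field_simp
  refine ⟨bp m l r, bp_natDegree m l r, ?_, ?_, ?_⟩
  · -- (b) outside the 2γ-band
    rintro φ ⟨hφ0, hφπ⟩ hnot
    have hcase : φ < θ - 2 * γ ∨ θ + 2 * γ < φ := by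
      by_contra hcon
      push_neg at hcon
      exact hnot (Set.mem_Icc.mpr ⟨hcon.1, hcon.2⟩)
    have hI1 : (∫ t in (φ - r)..(φ - l), Fk m t) ≤ B := by
      rcases hcase with h | h
      · apply Fk_piece_neg hmpos hγ0 hγπ
        · linarith
        · linarith
        · linarith
      · apply Fk_piece hmpos hγ0 hγπ
        · linarith
        · linarith
        · linarith
    have hI2 : (∫ t in (φ + l)..(φ + r), Fk m t) ≤ B := by
      rcases hcase with h | h
      · apply Fk_piece hmpos hγ0 hγπ
        · linarith
        · linarith
        · linarith
      · rcases le_or_gt π (θ + 3 * γ / 2) with hc | hc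
        · exfalso; linarith
        · apply Fk_piece hmpos hγ0 hγπ
          · linarith
          · linarith
          · linarith
    rw [abs_of_nonneg (hq01 φ).1, heval φ]
    have hmul : (1 / (2 * π)) * ((∫ t in (φ - r)..(φ - l), Fk m t)
          + ∫ t in (φ + l)..(φ + r), Fk m t) ≤ (1 / (2 * π)) * (2 * B) := by
      apply mul_le_mul_of_nonneg_left (by linarith) (by positivity)
    have hBv : (1 / (2 * π)) * (2 * B) = 8 / ((m : ℝ) * γ) := by
      rw [hBdef]; field_simp
    have h8 : 8 / ((m : ℝ) * γ) ≤ ε := by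
      have h812 : 8 / ((m : ℝ) * γ) ≤ 12 / ((m : ℝ) * γ) := by gcongr <;> norm_num
      linarith
    linarith
  · -- (c) on the γ-band
    rintro φ ⟨hφl, hφr⟩
    have hq := hq01 φ
    have hd := hdec φ
    have hE1 : (∫ t in (φ - π)..(φ - r), Fk m t) ≤ B := by
      rcases le_or_gt π (θ + 3 * γ / 2) with hc | hc
      · have hr : r = π := min_eq_left hc
        rw [hr, intervalIntegral.integral_same]
        exact hB0
      · have hr : r = θ + 3 * γ / 2 := min_eq_right hc.le
        apply Fk_piece_neg hmpos hγ0 hγπ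
        · linarith
        · linarith
        · linarith
    have hE2 : (∫ t in (φ - l)..(φ + l), Fk m t) ≤ B := by
      rcases le_or_gt (θ - 3 * γ / 2) 0 with hc | hc
      · have hl : l = 0 := max_eq_left hc
        rw [hl, sub_zero, add_zero, intervalIntegral.integral_same]
        exact hB0
      · have hl : l = θ - 3 * γ / 2 := max_eq_right hc.le
        apply Fk_piece hmpos hγ0 hγπ
        · linarith
        · linarith
        · linarith
    have hE3 : (∫ t in (φ + r)..(φ + π), Fk m t) ≤ B := by
      rcases le_or_gt π (θ + 3 * γ / 2) with hc | hc
      · have hr : r = π := min_eq_left hc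
        rw [hr, intervalIntegral.integral_same]
        exact hB0
      · have hr : r = θ + 3 * γ / 2 := min_eq_right hc.le
        apply Fk_piece hmpos hγ0 hγπ
        · linarith
        · linarith
        · linarith
    have hSge : 2 * π - 3 * B ≤ (∫ t in (φ - r)..(φ - l), Fk m t)
        + (∫ t in (φ + l)..(φ + r), Fk m t) := by linarith
    have hlow : (1 / (2 * π)) * (2 * π - 3 * B) ≤ (bp m l r).eval (Real.cos φ) := by
      rw [heval φ]
      apply mul_le_mul_of_nonneg_left hSge (by positivity)
    have hBval : (1 / (2 * π)) * (2 * π - 3 * B) = 1 - 12 / ((m : ℝ) * γ) := by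
      rw [hBdef]; field_simp; ring
    rw [abs_le]
    constructor
    · linarith
    · linarith [hq.2]
  · -- (d) global bound
    rintro φ _
    have hq := hq01 φ
    rw [abs_le]
    constructor <;> linarith [hq.1, hq.2]
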